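/- Let ∑ aₙ be a weak-permutably convergent series of real numbers with sum s, and let σ be a permutation of the positive integers. Then every convergent bracketing of ∑ a_{σ(n)} converges to s. -/

import Mathlib

def SeriesConvTo (a : ℕ → ℝ) (s : ℝ) : Prop :=
  Filter.Tendsto (fun n => ∑ i ∈ Finset.range n, a i) Filter.atTop (nhds s)

def BracketConvTo (c : ℕ → ℝ) (f : ℕ → ℕ) (t : ℝ) : Prop :=
  StrictMono f ∧ f 0 = 0 ∧
    Filter.Tendsto (fun K => ∑ i ∈ Finset.range (f K), c i) Filter.atTop (nhds t)

def WeakPermConv (a : ℕ → ℝ) : Prop :=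
  (∃ s, SeriesConvTo a s) ∧
    ∀ σ : Equiv.Perm ℕ, ∃ f : ℕ → ℕ, ∃ t : ℝ, BracketConvTo (fun n => a (σ n)) f t

open Filter Finset

private lemma count_add_count_not (p : ℕ → Prop) [DecidablePred p] (n : ℕ) :
    Nat.count p n + Nat.count (fun i => ¬ p i) n = n := by
  induction n with
  | zero => simp
  | succ n ih =>
    rw [Nat.count_succ, Nat.count_succ]
    by_cases h : p n <;> simp [h] <;> omega

private lemma sum_count_aux (p : ℕ → Prop) [DecidablePred p] (F : ℕ → ℝ) (n : ℕ) :
    ∑ i ∈ (Finset.range n).filter p, F (Nat.count p i)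
      = ∑ j ∈ Finset.range (Nat.count p n), F j := by
  induction n with
  | zero => simp
  | succ n ih =>
    rw [Finset.range_add_one, Finset.filter_insert, Nat.count_succ]
    by_cases h : p n
    · rw [if_pos h, if_pos h, Finset.sum_insert (by simp), ih, Finset.sum_range_succ,
        add_comm]
    · rw [if_neg h, if_neg h, ih]
      simp

/-- The order-preserving enumeration of an infinite decidable subset of `ℕ`, as an equiv. -/
private noncomputable def eqvOf (p : ℕ → Prop) [DecidablePred p] (hp : (setOf p).Infinite) : ℕ ≃ {n // p n} :=
  Equiv.ofBijective (fun j => ⟨Nat.nth p j, Nat.nth_mem_of_infinite hp j⟩)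
    ⟨fun i j hij => Nat.nth_injective hp (congrArg Subtype.val hij),
     fun m => ⟨Nat.count p m.1, Subtype.ext (Nat.nth_count m.2)⟩⟩

private lemma eqvOf_apply (p : ℕ → Prop) [DecidablePred p] (hp : (setOf p).Infinite) (j : ℕ) :
    ((eqvOf p hp) j : ℕ) = Nat.nth p j := rfl

private lemma eqvOf_symm_apply (p : ℕ → Prop) [DecidablePred p] (hp : (setOf p).Infinite)
    (i : ℕ) (hi : p i) : (eqvOf p hp).symm ⟨i, hi⟩ = Nat.count p i := by
  rw [Equiv.symm_apply_eq]
  exact Subtype.ext (Nat.nth_count hi).symm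

/-- Proposition 2.1: every convergent bracketing of a rearrangement of a weak-permutably
convergent series with sum `s` converges to `s`. -/
theorem prop21 (a : ℕ → ℝ) (s : ℝ)
    (h : WeakPermConv a) (hs : SeriesConvTo a s) (σ : Equiv.Perm ℕ) :
    ∀ f : ℕ → ℕ, ∀ t : ℝ, BracketConvTo (fun n => a (σ n)) f t → t = s := by
  classical
  rintro f t ⟨hfmono, hf0, hft⟩
  by_cases habs : Summable fun n => |a n|
  · -- absolutely convergent case
    have hsum : HasSum a s :=
      (hasSum_iff_tendsto_nat_of_summable_norm
        (by simpa [Real.norm_eq_abs] using habs)).mpr hs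
    have hσ : HasSum (fun n => a (σ n)) s := by
      refine (Function.Injective.hasSum_iff σ.injective ?_).mpr hsum
      intro x hx
      exact absurd (σ.surjective x) (by simpa [Set.range] using hx)
    have hσt : Tendsto (fun n => ∑ i ∈ Finset.range n, a (σ i)) atTop (nhds s) :=
      hσ.tendsto_sum_nat
    exact tendsto_nhds_unique hft (hσt.comp hfmono.tendsto_atTop)
  · -- conditionally convergent case: contradiction with weak permutable convergence
    exfalso
    set neg : ℕ → Prop := fun n => a n < 0 with hneg_def
    set P : ℕ → ℝ := fun n => if a n < 0 then 0 else a n with hP_def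
    set M : ℕ → ℝ := fun n => if a n < 0 then -a n else 0 with hM_def
    have hP0 : ∀ n, 0 ≤ P n := by
      intro n; by_cases hn : a n < 0 <;> simp [P, hn] <;> linarith
    have hM0 : ∀ n, 0 ≤ M n := by
      intro n; by_cases hn : a n < 0 <;> simp [M, hn] <;> linarith
    have hPM : ∀ n, P n + M n = |a n| := by
      intro n; by_cases hn : a n < 0
      · simp [P, M, hn, abs_of_neg hn]
      · simp [P, M, hn, abs_of_nonneg (not_lt.mp hn)]
    have hPa : ∀ n, P n - M n = a n := by
      intro n; by_cases hn : a n < 0 <;> simp [P, M, hn]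
    have hMmono : Monotone (fun n => ∑ i ∈ Finset.range n, M i) :=
      monotone_nat_of_le_succ fun n => by
        rw [Finset.sum_range_succ]; linarith [hM0 n]
    have hPmono : Monotone (fun n => ∑ i ∈ Finset.range n, P i) :=
      monotone_nat_of_le_succ fun n => by
        rw [Finset.sum_range_succ]; linarith [hP0 n]
    have hnotP : ¬ Summable P := by
      intro hP
      have hPt := hP.hasSum.tendsto_sum_nat
      have hMt : Tendsto (fun n => ∑ i ∈ Finset.range n, M i) atTop (nhds (∑' n, P n - s)) := by
        refine (hPt.sub hs).congr fun n => ?_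
        rw [← Finset.sum_sub_distrib]
        exact Finset.sum_congr rfl fun i _ => by linarith [hPa i]
      have hMsum : Summable M :=
        summable_of_sum_range_le hM0 fun n => hMmono.ge_of_tendsto hMt n
      exact habs (by simpa [hPM] using hP.add hMsum)
    have hnotM : ¬ Summable M := by
      intro hM
      have hMt := hM.hasSum.tendsto_sum_nat
      have hPt : Tendsto (fun n => ∑ i ∈ Finset.range n, P i) atTop (nhds (s + ∑' n, M n)) := by
        refine (hs.add hMt).congr fun n => ?_
        rw [← Finset.sum_add_distrib]
        exact Finset.sum_congr rfl fun i _ => by linarith [hPa i]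
      have hPsum : Summable P :=
        summable_of_sum_range_le hP0 fun n => hPmono.ge_of_tendsto hPt n
      exact hnotP hPsum
    -- the sets of positive and negative indices are infinite
    have hNegInf : (setOf neg).Infinite := by
      by_contra hfin
      rw [Set.not_infinite] at hfin
      refine hnotM (summable_of_ne_finset_zero (s := hfin.toFinset) ?_)
      intro n hn
      have hn' : ¬ a n < 0 := fun hcon => hn (hfin.mem_toFinset.mpr hcon)
      simp [M, hn']
    have hPosInf : (setOf fun n => ¬ neg n).Infinite := by
      by_contra hfin
      rw [Set.not_infinite] at hfin
      refine hnotP (summable_of_ne_finset_zero (s := hfin.toFinset) ?_)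
      intro n hn
      have hn' : a n < 0 := by
        by_contra hc
        exact hn (hfin.mem_toFinset.mpr hc)
      simp [P, hn']
    -- partial sums of the positive and negative subseries
    set T : ℕ → ℝ := fun m => ∑ j ∈ Finset.range m, a (Nat.nth (fun n => ¬ neg n) j) with hT_def
    set U : ℕ → ℝ := fun c => ∑ k ∈ Finset.range c, -a (Nat.nth neg k) with hU_def
    have hTterm : ∀ j, 0 ≤ a (Nat.nth (fun n => ¬ neg n) j) := fun j =>
      not_lt.mp (Nat.nth_mem_of_infinite hPosInf j)
    have hTmono : Monotone T :=
      monotone_nat_of_le_succ fun m => by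
        simp only [hT_def, Finset.sum_range_succ]
        linarith [hTterm m]
    have hT0 : ∀ m, 0 ≤ T m := fun m =>
      Finset.sum_nonneg fun j _ => hTterm j
    have hTP : ∀ n, T (Nat.count (fun n => ¬ neg n) n) = ∑ i ∈ Finset.range n, P i := by
      intro n
      have e1 : ∑ i ∈ Finset.range n, P i
          = ∑ i ∈ (Finset.range n).filter (fun m => ¬ neg m), a i := by
        rw [Finset.sum_filter]
        refine Finset.sum_congr rfl fun i _ => ?_
        by_cases hi : a i < 0 <;> simp [P, neg, hi]
      have e2 : ∑ i ∈ (Finset.range n).filter (fun m => ¬ neg m), a i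
          = ∑ i ∈ (Finset.range n).filter (fun m => ¬ neg m),
              (fun j => a (Nat.nth (fun m => ¬ neg m) j)) (Nat.count (fun m => ¬ neg m) i) := by
        refine Finset.sum_congr rfl fun i hi => ?_
        exact (congrArg a (Nat.nth_count (Finset.mem_filter.mp hi).2)).symm
      rw [e1, e2, sum_count_aux (fun m => ¬ neg m) (fun j => a (Nat.nth (fun m => ¬ neg m) j)) n]
    have hTtop : Tendsto T atTop atTop := by
      refine tendsto_atTop_atTop_of_monotone hTmono fun b => ?_
      have hPdiv : Tendsto (fun n => ∑ i ∈ Finset.range n, P i) atTop atTop :=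
        (not_summable_iff_tendsto_nat_atTop_of_nonneg hP0).mp hnotP
      obtain ⟨n, hn⟩ := (hPdiv.eventually_ge_atTop b).exists
      exact ⟨Nat.count (fun n => ¬ neg n) n, by rw [hTP]; exact hn⟩
    -- construct the block endpoints g
    have hex : ∀ (k x : ℕ), ∃ m, x + 2 ≤ m ∧ (k : ℝ) + U k ≤ T m := by
      intro k x
      obtain ⟨m, hm1, hm2⟩ :=
        ((hTtop.eventually_ge_atTop ((k : ℝ) + U k)).and (eventually_ge_atTop (x + 2))).exists
      exact ⟨m, hm2, hm1⟩
    obtain ⟨g, hg0, hgstep, hgT'⟩ :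
        ∃ g : ℕ → ℕ, g 0 = 0 ∧ (∀ k, g k + 2 ≤ g (k + 1)) ∧
          ∀ k : ℕ, ((k : ℝ) + 1) + U (k + 1) ≤ T (g (k + 1)) := by
      choose G hG1 hG2 using hex
      refine ⟨fun n => Nat.rec 0 (fun k ih => G (k + 1) ih) n, rfl,
        fun k => hG1 _ _, fun k => ?_⟩
      have := hG2 (k + 1) (Nat.rec 0 (fun k ih => G (k + 1) ih) k)
      push_cast at this ⊢
      exact this
    have hgT : ∀ c : ℕ, (c : ℝ) + U c ≤ T (g c) := by
      intro c
      rcases c with _ | c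
      · simp [hg0, hU_def, hT_def]
      · have := hgT' c
        push_cast at this ⊢
        linarith
    -- the slot sequence and slot predicate
    set u : ℕ → ℕ := fun k => g (k + 1) + k with hu_def
    have humono : StrictMono u := strictMono_nat_of_lt_succ fun k => by
      have h2 : g (k + 1) + 2 ≤ g (k + 1 + 1) := hgstep (k + 1)
      simp only [hu_def]
      omega
    have hu2 : ∀ k, u k + 2 ≤ u (k + 1) := fun k => by
      have h2 : g (k + 1) + 2 ≤ g (k + 1 + 1) := hgstep (k + 1)
      simp only [hu_def]
      omega
    set slot : ℕ → Prop := fun n => ∃ k, u k = n with hslot_def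
    have hslotInf : (setOf slot).Infinite :=
      Set.infinite_of_injective_forall_mem humono.injective fun k => ⟨k, rfl⟩
    have hnonslotInf : (setOf fun n => ¬ slot n).Infinite := by
      refine Set.infinite_of_injective_forall_mem (f := fun k => u k + 1)
        (fun i j hij => humono.injective (Nat.succ_injective hij)) fun k => ?_
      show ¬ slot (u k + 1)
      rintro ⟨j, hj⟩
      rcases le_or_gt j k with hjk | hjk
      · have := humono.monotone hjk; omega
      · have h1 : u (k + 1) ≤ u j := humono.monotone hjk
        have := hu2 k; omega
    have hcount_u : ∀ k, Nat.count slot (u k) = k := by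
      intro k
      rw [Nat.count_eq_card_filter_range]
      have heq : (Finset.range (u k)).filter slot = (Finset.range k).image u := by
        ext m
        simp only [Finset.mem_filter, Finset.mem_range, Finset.mem_image]
        constructor
        · rintro ⟨hm, j, rfl⟩
          exact ⟨j, humono.lt_iff_lt.mp hm, rfl⟩
        · rintro ⟨j, hj, rfl⟩
          exact ⟨humono hj, j, rfl⟩
      rw [heq, Finset.card_image_of_injective _ humono.injective, Finset.card_range]
    have hnth_u : ∀ k, Nat.nth slot k = u k := by
      intro k
      conv_lhs => rw [← hcount_u k]
      exact Nat.nth_count ⟨k, rfl⟩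
    -- the permutation
    set π : Equiv.Perm ℕ :=
      ((Equiv.sumCompl slot).symm.trans
        (Equiv.sumCongr ((eqvOf slot hslotInf).symm.trans (eqvOf neg hNegInf))
          ((eqvOf (fun n => ¬ slot n) hnonslotInf).symm.trans
            (eqvOf (fun n => ¬ neg n) hPosInf)))).trans (Equiv.sumCompl neg) with hπ_def
    have hπ_slot : ∀ i, slot i → π i = Nat.nth neg (Nat.count slot i) := by
      intro i hi
      rw [hπ_def]
      simp only [Equiv.trans_apply]
      rw [Equiv.sumCompl_symm_apply_of_pos (p := slot) hi]
      simp only [Equiv.sumCongr_apply, Sum.map_inl, Equiv.trans_apply]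
      rw [eqvOf_symm_apply slot hslotInf i hi]
      rw [Equiv.sumCompl_apply_inl]
      rfl
    have hπ_nonslot : ∀ i, ¬ slot i →
        π i = Nat.nth (fun n => ¬ neg n) (Nat.count (fun n => ¬ slot n) i) := by
      intro i hi
      rw [hπ_def]
      simp only [Equiv.trans_apply]
      rw [Equiv.sumCompl_symm_apply_of_neg (p := slot) hi]
      simp only [Equiv.sumCongr_apply, Sum.map_inr, Equiv.trans_apply]
      rw [eqvOf_symm_apply (fun n => ¬ slot n) hnonslotInf i hi]
      rw [Equiv.sumCompl_apply_inr]
      rfl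
    -- the partial sums of the rearranged series
    have hsum_eq : ∀ n, ∑ i ∈ Finset.range n, a (π i)
        = T (Nat.count (fun m => ¬ slot m) n) - U (Nat.count slot n) := by
      intro n
      rw [← Finset.sum_filter_add_sum_filter_not (Finset.range n) slot]
      have h1 : ∑ i ∈ (Finset.range n).filter slot, a (π i)
          = - U (Nat.count slot n) := by
        rw [Finset.sum_congr rfl fun i hi =>
          (by rw [hπ_slot i (Finset.mem_filter.mp hi).2] :
            a (π i) = (fun k => a (Nat.nth neg k)) (Nat.count slot i))]
        rw [sum_count_aux slot (fun k => a (Nat.nth neg k)) n]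
        rw [hU_def]
        simp [Finset.sum_neg_distrib]
      have h2 : ∑ i ∈ (Finset.range n).filter (fun i => ¬ slot i), a (π i)
          = T (Nat.count (fun m => ¬ slot m) n) := by
        rw [Finset.sum_congr rfl fun i hi =>
          (by rw [hπ_nonslot i (Finset.mem_filter.mp hi).2] :
            a (π i) = (fun k => a (Nat.nth (fun n => ¬ neg n) k))
              (Nat.count (fun m => ¬ slot m) i))]
        rw [sum_count_aux (fun m => ¬ slot m) (fun k => a (Nat.nth (fun n => ¬ neg n) k)) n]
      rw [h1, h2]; ring
    have hS_ge : ∀ n, (Nat.count slot n : ℝ) ≤ ∑ i ∈ Finset.range n, a (π i) := by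
      intro n
      rw [hsum_eq n]
      have hcd : Nat.count slot n + Nat.count (fun m => ¬ slot m) n = n :=
        count_add_count_not slot n
      rcases Nat.eq_zero_or_pos (Nat.count slot n) with hc0 | hcpos
      · rw [hc0]
        have hU0 : U 0 = 0 := by simp [hU_def]
        rw [hU0]
        simpa using hT0 (Nat.count (fun m => ¬ slot m) n)
      · obtain ⟨c', hc'⟩ : ∃ c', Nat.count slot n = c' + 1 :=
          ⟨Nat.count slot n - 1, by omega⟩
        have hlt : Nat.nth slot c' < n := Nat.nth_lt_of_lt_count (by omega)
        rw [hnth_u c'] at hlt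
        have hlt' : g (c' + 1) + c' < n := by simpa [hu_def] using hlt
        have hgd : g (c' + 1) ≤ Nat.count (fun m => ¬ slot m) n := by omega
        have hTd : T (g (c' + 1)) ≤ T (Nat.count (fun m => ¬ slot m) n) := hTmono hgd
        have hb := hgT (c' + 1)
        rw [hc']
        push_cast at hb ⊢
        linarith
    have hStop : Tendsto (fun n => ∑ i ∈ Finset.range n, a (π i)) atTop atTop := by
      refine tendsto_atTop_mono hS_ge ?_
      refine tendsto_natCast_atTop_atTop.comp ?_
      refine tendsto_atTop_atTop_of_monotone (Nat.count_monotone slot) fun b => ?_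
      refine ⟨u b + 1, ?_⟩
      rw [Nat.count_succ]
      have hb : slot (u b) := ⟨b, rfl⟩
      rw [if_pos hb, hcount_u b]
      omega
    obtain ⟨f', t', hf'mono, hf'0, hf't⟩ := h.2 π
    exact not_tendsto_nhds_of_tendsto_atTop
      (hStop.comp hf'mono.tendsto_atTop) t' hf't
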